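/- Let a > 1 and let X ∈ ℝ^{m×n} (m ≤ n) be a matrix with rank(X) = r and largest singular value σ₁(X). Set β₁ = a·(a·r − a + 1)·σ₁(X)/(a − 1). Then for every β ≥ β₁ with β > 0, one has P_a(β⁻¹·X) ≤ 1 − 1/a. -/

import Mathlib

open Matrix Filter

/-- The singular values of a real `m × n` matrix: square roots of the eigenvalues of `X * Xᵀ`. -/
noncomputable def sv {m n : ℕ} (X : Matrix (Fin m) (Fin n) ℝ) : Fin m → ℝ :=
  fun i => Real.sqrt ((Matrix.isHermitian_mul_conjTranspose_self X).eigenvalues i)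

/-- The singular values arranged in descending order: `svSorted X 0 ≥ svSorted X 1 ≥ ⋯`. -/
noncomputable def svSorted {m n : ℕ} (X : Matrix (Fin m) (Fin n) ℝ) : Fin m → ℝ :=
  fun i => sv X (Tuple.sort (sv X) i.rev)

/-- `P_a(X) = Σᵢ a σᵢ(X)/(a σᵢ(X) + 1)`. -/
noncomputable def Pa {m n : ℕ} (a : ℝ) (X : Matrix (Fin m) (Fin n) ℝ) : ℝ :=
  ∑ i, a * sv X i / (a * sv X i + 1)

/-- Frobenius norm. -/
noncomputable def frobNorm {m n : ℕ} (X : Matrix (Fin m) (Fin n) ℝ) : ℝ :=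
  Real.sqrt (∑ i, ∑ j, (X i j) ^ 2)

/-- Nuclear norm: the sum of the singular values. -/
noncomputable def nuclearNorm {m n : ℕ} (X : Matrix (Fin m) (Fin n) ℝ) : ℝ :=
  ∑ i, sv X i

/-- The rectangular `m × n` "diagonal" matrix with diagonal entries `σ`. -/
def diagRect {m n : ℕ} (σ : Fin m → ℝ) : Matrix (Fin m) (Fin n) ℝ :=
  Matrix.of fun i j => if (j : ℕ) = (i : ℕ) then σ i else 0

/-- The `r`-restricted isometry constant `δ_r(𝒜)`. -/
noncomputable def ripConst {m n d : ℕ}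
    (A : Matrix (Fin m) (Fin n) ℝ →ₗ[ℝ] EuclideanSpace ℝ (Fin d)) (r : ℕ) : ℝ :=
  sInf {δ : ℝ | 0 ≤ δ ∧ ∀ X : Matrix (Fin m) (Fin n) ℝ, X.rank ≤ r →
    (1 - δ) * frobNorm X ^ 2 ≤ ‖A X‖ ^ 2 ∧ ‖A X‖ ^ 2 ≤ (1 + δ) * frobNorm X ^ 2}


section AuxStatement7

open Pointwise

private lemma rank_smul_eq' {m n : ℕ} (c : ℝ) (hc : c ≠ 0) (X : Matrix (Fin m) (Fin n) ℝ) :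
    (c • X).rank = X.rank := by
  unfold Matrix.rank
  have h : (c • X).mulVecLin = c • X.mulVecLin := by
    ext v i
    simp [Matrix.mulVecLin, Matrix.smul_mulVec]
  rw [h, LinearMap.range_smul _ _ hc]

private lemma sv_smul_eq' {m n : ℕ} (hm : 0 < m) (X : Matrix (Fin m) (Fin n) ℝ) (β : ℝ)
    (hβ : 0 < β) (i : Fin m) : ∃ j, sv (β⁻¹ • X) i = β⁻¹ * sv X j := by
  haveI : NeZero m := ⟨hm.ne'⟩
  set Y := β⁻¹ • X with hY
  have hYY : Y * Yᴴ = (β⁻¹ * β⁻¹) • (X * Xᴴ) := by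
    simp [hY, Matrix.smul_mul, Matrix.mul_smul, conjTranspose_smul, smul_smul]
  have hmem : (Matrix.isHermitian_mul_conjTranspose_self Y).eigenvalues i
      ∈ spectrum ℝ (Y * Yᴴ) :=
    Matrix.IsHermitian.eigenvalues_mem_spectrum_real _ i
  have h2 : spectrum ℝ (Y * Yᴴ) =
      (β⁻¹ * β⁻¹) • (Set.range (Matrix.isHermitian_mul_conjTranspose_self X).eigenvalues : Set ℝ) := by
    rw [hYY, spectrum.smul_eq_smul _ _
        ((Matrix.isHermitian_mul_conjTranspose_self X).spectrum_real_eq_range_eigenvalues ▸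
          Set.range_nonempty _),
      (Matrix.isHermitian_mul_conjTranspose_self X).spectrum_real_eq_range_eigenvalues]
  rw [h2] at hmem
  obtain ⟨lam, ⟨j, rfl⟩, hx⟩ := hmem
  refine ⟨j, ?_⟩
  have h3 : sv Y i = Real.sqrt ((β⁻¹ * β⁻¹) *
      (Matrix.isHermitian_mul_conjTranspose_self X).eigenvalues j) := by
    rw [sv, ← hx]; rfl
  rw [h3, Real.sqrt_mul (by positivity), Real.sqrt_mul_self (by positivity)]
  rfl

private lemma card_sv_ne_zero' {m n : ℕ} (Y : Matrix (Fin m) (Fin n) ℝ) :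
    (Finset.univ.filter fun i => sv Y i ≠ 0).card = Y.rank := by
  rw [← Matrix.rank_self_mul_conjTranspose Y,
    (Matrix.isHermitian_mul_conjTranspose_self Y).rank_eq_card_non_zero_eigs,
    Fintype.card_subtype]
  congr 1
  ext i
  have h := Matrix.eigenvalues_self_mul_conjTranspose_nonneg Y i
  simp only [Finset.mem_filter, Finset.mem_univ, true_and, sv,
    ne_eq, Real.sqrt_eq_zero h, Set.mem_setOf_eq]
  simpa using not_congr (Real.sqrt_eq_zero h)

private lemma sv_le_max' {m n : ℕ} (hm : 0 < m) (X : Matrix (Fin m) (Fin n) ℝ) (j : Fin m) :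
    sv X j ≤ svSorted X ⟨0, hm⟩ := by
  have hmono := Tuple.monotone_sort (sv X)
  have hle : (Tuple.sort (sv X)).symm j ≤ (Fin.rev (⟨0, hm⟩ : Fin m)) := by
    rw [Fin.le_def]
    simp only [Fin.val_rev]
    omega
  have h := hmono hle
  simpa [svSorted, Function.comp] using h

private lemma final_arith' (a σ β r' : ℝ) (ha : 1 < a) (hσ : 0 ≤ σ) (hβ : 0 < β)
    (h1 : a * (a * r' - a + 1) * σ ≤ (a - 1) * β) :
    r' * (a * (β⁻¹ * σ) / (a * (β⁻¹ * σ) + 1)) ≤ 1 - 1 / a := by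
  have ha0 : (0:ℝ) < a := by linarith
  have hd : 0 < a * (β⁻¹ * σ) + 1 := by positivity
  rw [← mul_div_assoc, div_le_iff₀ hd]
  have hβ' : β ≠ 0 := hβ.ne'
  have ha' : a ≠ 0 := ha0.ne'
  field_simp
  nlinarith [h1, mul_pos hβ ha0]

private lemma frac_mono' (a s t : ℝ) (ha : 0 < a) (hs : 0 ≤ s) (hst : s ≤ t) :
    a * s / (a * s + 1) ≤ a * t / (a * t + 1) := by
  have h1 : (0:ℝ) < a * s + 1 := by positivity
  have h2 : (0:ℝ) < a * t + 1 := by nlinarith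
  rw [div_le_div_iff₀ h1 h2]
  nlinarith

end AuxStatement7

theorem statement7 (m n : ℕ) (hm : 0 < m) (hmn : m ≤ n) (a : ℝ) (ha : 1 < a)
    (X : Matrix (Fin m) (Fin n) ℝ) (r : ℕ) (hr : X.rank = r)
    (β : ℝ) (hβpos : 0 < β)
    (hβ : β ≥ a * (a * (r : ℝ) - a + 1) * svSorted X ⟨0, hm⟩ / (a - 1)) :
    Pa a (β⁻¹ • X) ≤ 1 - 1 / a := by
  classical
  have ha0 : (0:ℝ) < a := lt_trans one_pos ha
  set Y := β⁻¹ • X with hYdef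
  have hσ0 : 0 ≤ svSorted X ⟨0, hm⟩ := Real.sqrt_nonneg _
  have hbound : ∀ i, sv Y i ≤ β⁻¹ * svSorted X ⟨0, hm⟩ := by
    intro i
    obtain ⟨j, hj⟩ := sv_smul_eq' hm X β hβpos i
    rw [hj]
    exact mul_le_mul_of_nonneg_left (sv_le_max' hm X j) (by positivity)
  have hcard : (Finset.univ.filter fun i => sv Y i ≠ 0).card = r := by
    rw [card_sv_ne_zero', hYdef, rank_smul_eq' _ (inv_ne_zero hβpos.ne') X, hr]
  have hsum : Pa a Y ≤ (r:ℝ) * (a * (β⁻¹ * svSorted X ⟨0, hm⟩) /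
      (a * (β⁻¹ * svSorted X ⟨0, hm⟩) + 1)) := by
    calc Pa a Y = ∑ i ∈ Finset.univ.filter (fun i => sv Y i ≠ 0),
        a * sv Y i / (a * sv Y i + 1) := by
          rw [Pa]
          refine (Finset.sum_filter_of_ne ?_).symm
          intro i _ hne h0
          apply hne
          rw [h0]; simp
      _ ≤ ∑ _i ∈ Finset.univ.filter (fun i => sv Y i ≠ 0),
          a * (β⁻¹ * svSorted X ⟨0, hm⟩) / (a * (β⁻¹ * svSorted X ⟨0, hm⟩) + 1) :=
          Finset.sum_le_sum fun i _ => frac_mono' a _ _ ha0 (Real.sqrt_nonneg _) (hbound i)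
      _ = _ := by rw [Finset.sum_const, hcard, nsmul_eq_mul]
  refine hsum.trans (final_arith' a _ β r ha hσ0 hβpos ?_)
  rw [ge_iff_le, div_le_iff₀ (by linarith : (0:ℝ) < a - 1)] at hβ
  linarith
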